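/- Let C > 1. There is a constant λ > 1 depending only on C such that every finite-dimensional real normed space V is C-isomorphic to a linear subspace of ℓ_∞^m for some m ≤ λ^{dim V}. -/

import Mathlib

set_option maxHeartbeats 1000000

open Metric MeasureTheory Module

/-- Volumetric bound: an `ε`-separated finite subset of the unit ball of a
finite-dimensional real normed space has cardinality at most `(2 + 2/ε) ^ dim`. -/
lemma sep_card_le {E : Type} [NormedAddCommGroup E] [NormedSpace ℝ E]
    [FiniteDimensional ℝ E] [MeasurableSpace E] [BorelSpace E]
    (μ : Measure E) [μ.IsAddHaarMeasure] {ε : ℝ} (hε : 0 < ε)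
    (S : Finset E) (hS : (S : Set E) ⊆ closedBall (0 : E) 1)
    (hsep : (S : Set E).Pairwise fun x y => ε ≤ dist x y) :
    (S.card : ℝ) ≤ (2 + 2 / ε) ^ finrank ℝ E := by
  set n := finrank ℝ E
  have hε2 : (0:ℝ) < ε / 2 := by linarith
  have hdisj : (S : Set E).PairwiseDisjoint fun x => ball x (ε / 2) := by
    intro x hx y hy hxy
    have h := hsep hx hy hxy
    refine Set.disjoint_left.2 fun z hzx hzy => ?_
    have : dist x y < ε := by
      calc dist x y ≤ dist x z + dist z y := dist_triangle x z y
        _ < ε / 2 + ε / 2 := by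
            have := mem_ball.1 hzx
            have := mem_ball.1 hzy
            rw [dist_comm x z] at *
            linarith [mem_ball.1 hzx, mem_ball.1 hzy]
        _ = ε := by ring
    linarith
  have hsub : (⋃ x ∈ S, ball x (ε / 2)) ⊆ ball (0 : E) (1 + ε) := by
    intro z hz
    simp only [Set.mem_iUnion] at hz
    obtain ⟨x, hx, hzx⟩ := hz
    have hx1 : ‖x‖ ≤ 1 := mem_closedBall_zero_iff.1 (hS hx)
    have : dist z x < ε / 2 := mem_ball.1 hzx
    have : ‖z‖ < 1 + ε := by
      calc ‖z‖ ≤ ‖x‖ + ‖z - x‖ := norm_le_insert' z x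
        _ < 1 + ε / 2 := by
            have : ‖z - x‖ < ε / 2 := by rwa [← dist_eq_norm]
            linarith
        _ ≤ 1 + ε := by linarith
    exact mem_ball_zero_iff.2 this
  have hmeas : ∑ x ∈ S, μ (ball x (ε / 2)) ≤ μ (ball (0 : E) (1 + ε)) := by
    rw [← measure_biUnion_finset hdisj fun x _ => measurableSet_ball]
    exact measure_mono hsub
  have hball : ∀ x : E, μ (ball x (ε / 2)) = ENNReal.ofReal ((ε/2) ^ n) * μ (ball (0:E) 1) :=
    fun x => Measure.addHaar_ball_of_pos μ x hε2
  have hbig : μ (ball (0 : E) (1 + ε)) = ENNReal.ofReal ((1+ε) ^ n) * μ (ball (0:E) 1) :=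
    Measure.addHaar_ball_of_pos μ 0 (by linarith)
  simp only [hball, Finset.sum_const, nsmul_eq_mul, hbig] at hmeas
  have h0 : μ (ball (0:E) 1) ≠ 0 := (measure_ball_pos μ 0 one_pos).ne'
  have htop : μ (ball (0:E) 1) ≠ ⊤ :=
    ((measure_mono ball_subset_closedBall).trans_lt
      (isCompact_closedBall (0:E) 1).measure_lt_top).ne
  rw [← mul_assoc, ENNReal.mul_le_mul_iff_left h0 htop] at hmeas
  have hreal : (S.card : ℝ) * (ε/2) ^ n ≤ (1+ε) ^ n := by
    rw [← ENNReal.ofReal_natCast, ← ENNReal.ofReal_mul (by positivity),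
      ENNReal.ofReal_le_ofReal_iff (by positivity)] at hmeas
    exact hmeas
  have hfac : ((1:ℝ)+ε) ^ n = (2 + 2/ε) ^ n * (ε/2) ^ n := by
    rw [← mul_pow]
    congr 1
    field_simp
    ring
  have hpow : (0:ℝ) < (ε/2) ^ n := pow_pos hε2 n
  nlinarith [hreal, hfac]

/-- Existence of an `ε`-net of the unit ball with cardinality at most `(2 + 2/ε) ^ dim`. -/
lemma net_exists {E : Type} [NormedAddCommGroup E] [NormedSpace ℝ E]
    [FiniteDimensional ℝ E] {ε : ℝ} (hε : 0 < ε) :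
    ∃ S : Finset E, (S : Set E) ⊆ closedBall (0 : E) 1 ∧
      (S.card : ℝ) ≤ (2 + 2 / ε) ^ finrank ℝ E ∧
      ∀ x ∈ closedBall (0 : E) 1, ∃ y ∈ S, dist x y ≤ ε := by
  classical
  letI : MeasurableSpace E := borel E
  haveI : BorelSpace E := ⟨rfl⟩
  have b := Module.finBasis ℝ E
  set μ : Measure E := volume.map b.equivFun.symm with hμ
  haveI : μ.IsAddHaarMeasure :=
    Measure.MapLinearEquiv.isAddHaarMeasure volume b.equivFun.symm
  set A : Set ℕ := {k | ∃ S : Finset E, ((S : Set E) ⊆ closedBall (0 : E) 1 ∧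
      (S : Set E).Pairwise fun x y => ε ≤ dist x y) ∧ S.card = k} with hA
  have h0A : 0 ∈ A := ⟨∅, ⟨by simp, by simp⟩, rfl⟩
  have hbdd : BddAbove A := by
    refine ⟨⌈(2 + 2 / ε) ^ finrank ℝ E⌉₊, fun k hk => ?_⟩
    obtain ⟨S, ⟨hsub, hsep⟩, rfl⟩ := hk
    have := sep_card_le μ hε S hsub hsep
    exact_mod_cast this.trans (Nat.le_ceil _)
  obtain ⟨S, ⟨hSsub, hSsep⟩, hScard⟩ := Nat.sSup_mem ⟨0, h0A⟩ hbdd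
  refine ⟨S, hSsub, sep_card_le μ hε S hSsub hSsep, ?_⟩
  intro x hx
  by_contra h
  push_neg at h
  have hxS : x ∉ S := fun hxS => by
    have := h x hxS
    simp only [dist_self] at this
    linarith
  have hsub' : ((insert x S : Finset E) : Set E) ⊆ closedBall (0 : E) 1 := by
    rw [Finset.coe_insert]
    exact Set.insert_subset hx hSsub
  have hsep' : ((insert x S : Finset E) : Set E).Pairwise fun a b => ε ≤ dist a b := by
    rw [Finset.coe_insert]
    refine hSsep.insert fun y hy hxy => ?_
    have := (h y hy).le
    exact ⟨this, by rwa [dist_comm]⟩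
  have hmem : S.card + 1 ∈ A := ⟨insert x S, ⟨hsub', hsep'⟩, Finset.card_insert_of_notMem hxS⟩
  have := le_csSup hbdd hmem
  omega

theorem embed_linfty_exists (C : ℝ) (hC : 1 < C) :
    ∃ lam : ℝ, 1 < lam ∧
      ∀ (V : Type) [NormedAddCommGroup V] [NormedSpace ℝ V] [FiniteDimensional ℝ V],
        ∃ m : ℕ, (m : ℝ) ≤ lam ^ Module.finrank ℝ V ∧
          ∃ Φ : V →ₗ[ℝ] PiLp ⊤ (fun _ : Fin m => ℝ),
            ∀ v, ‖v‖ ≤ ‖Φ v‖ ∧ ‖Φ v‖ ≤ C * ‖v‖ := by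
  have hC0 : (0:ℝ) < C := by linarith
  set ε : ℝ := (C - 1) / C with hεdef
  have hε : 0 < ε := div_pos (by linarith) hC0
  have hCe : C * (1 - ε) = 1 := by rw [hεdef]; field_simp; ring
  have hlam : (1:ℝ) < 2 + 2 / ε := by
    have h2 : (0:ℝ) < 2 / ε := by positivity
    linarith
  refine ⟨2 + 2 / ε, hlam, ?_⟩
  intro V _ _ _
  obtain ⟨S, hSsub, hScard, hSnet⟩ := net_exists (E := V →L[ℝ] ℝ) hε
  have hrank : finrank ℝ (V →L[ℝ] ℝ) = finrank ℝ V := by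
    rw [← (LinearMap.toContinuousLinearMap : (V →ₗ[ℝ] ℝ) ≃ₗ[ℝ] V →L[ℝ] ℝ).finrank_eq]
    exact Subspace.dual_finrank_eq
  rw [hrank] at hScard
  refine ⟨S.card, hScard, ?_⟩
  set m := S.card with hm
  set eqv : Fin m ≃ {x // x ∈ S} := S.equivFin.symm with heqv
  set L : V →ₗ[ℝ] (Fin m → ℝ) :=
    LinearMap.pi (fun i => C • ((eqv i : V →L[ℝ] ℝ) : V →ₗ[ℝ] ℝ)) with hL
  refine ⟨(WithLp.linearEquiv ⊤ ℝ (Fin m → ℝ)).symm.toLinearMap.comp L, fun v => ?_⟩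
  set Φ := (WithLp.linearEquiv ⊤ ℝ (Fin m → ℝ)).symm.toLinearMap.comp L with hΦ
  have happ : ∀ (w : V) (i : Fin m), Φ w i = C * (eqv i : V →L[ℝ] ℝ) w := by
    intro w i
    simp only [hΦ, LinearMap.coe_comp, Function.comp_apply, LinearEquiv.coe_coe,
      WithLp.linearEquiv_symm_apply, hL,
      LinearMap.pi_apply, LinearMap.smul_apply, ContinuousLinearMap.coe_coe, smul_eq_mul]
    rfl
  have hnorm : ‖Φ v‖ = ⨆ i, ‖Φ v i‖ := PiLp.norm_eq_ciSup _
  constructor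
  · by_cases hv : v = 0
    · simp [hv]
    · obtain ⟨g, hg1, hgv⟩ := exists_dual_vector ℝ v (norm_ne_zero_iff.2 hv)
      have hgball : g ∈ closedBall (0 : V →L[ℝ] ℝ) 1 := mem_closedBall_zero_iff.2 hg1.le
      obtain ⟨f, hfS, hfd⟩ := hSnet g hgball
      set i : Fin m := eqv.symm ⟨f, hfS⟩ with hi
      have hfi : (eqv i : V →L[ℝ] ℝ) = f := by rw [hi, Equiv.apply_symm_apply]
      have hgv' : g v = ‖v‖ := by exact_mod_cast hgv
      have h1 : ‖g v - f v‖ ≤ ε * ‖v‖ := by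
        have h1a : ‖(g - f) v‖ ≤ ‖g - f‖ * ‖v‖ := (g - f).le_opNorm v
        have h1b : ‖g - f‖ ≤ ε := by rwa [← dist_eq_norm]
        calc ‖g v - f v‖ = ‖(g - f) v‖ := by simp
          _ ≤ ‖g - f‖ * ‖v‖ := h1a
          _ ≤ ε * ‖v‖ := mul_le_mul_of_nonneg_right h1b (norm_nonneg v)
      have h2 : (1 - ε) * ‖v‖ ≤ f v := by
        have := abs_le.1 (hgv' ▸ h1 : |‖v‖ - f v| ≤ ε * ‖v‖)
        nlinarith [this.1, this.2]
      have h3 : ‖v‖ ≤ C * f v := by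
        have h2' : C * ((1 - ε) * ‖v‖) ≤ C * f v := by
          exact mul_le_mul_of_nonneg_left h2 hC0.le
        calc ‖v‖ = C * (1 - ε) * ‖v‖ := by rw [hCe]; ring
          _ = C * ((1 - ε) * ‖v‖) := by ring
          _ ≤ C * f v := h2'
      have h4 : ‖Φ v i‖ ≤ ‖Φ v‖ := by
        rw [hnorm]
        exact le_ciSup (f := fun j => ‖Φ v j‖) (Set.Finite.bddAbove (Set.finite_range _)) i
      calc ‖v‖ ≤ C * f v := h3
        _ ≤ |C * f v| := le_abs_self _
        _ = ‖Φ v i‖ := by rw [happ v i, hfi, Real.norm_eq_abs]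
        _ ≤ ‖Φ v‖ := h4
  · rw [hnorm]
    refine Real.iSup_le (fun i => ?_) (by positivity)
    have hfle : ‖(eqv i : V →L[ℝ] ℝ)‖ ≤ 1 :=
      mem_closedBall_zero_iff.1 (hSsub (eqv i).2)
    calc ‖Φ v i‖ = |C| * ‖(eqv i : V →L[ℝ] ℝ) v‖ := by
          rw [happ v i, Real.norm_eq_abs, abs_mul, Real.norm_eq_abs]
      _ ≤ C * (1 * ‖v‖) := by
          rw [abs_of_pos hC0]
          refine mul_le_mul_of_nonneg_left ?_ hC0.le
          calc ‖(eqv i : V →L[ℝ] ℝ) v‖ ≤ ‖(eqv i : V →L[ℝ] ℝ)‖ * ‖v‖ :=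
                ContinuousLinearMap.le_opNorm _ v
            _ ≤ 1 * ‖v‖ := mul_le_mul_of_nonneg_right hfle (norm_nonneg v)
      _ = C * ‖v‖ := by ring
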